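/- Let P_F be a forward policy and Z > 0, with state flows F(s) and edge flows F(s→s'). Then for every nonterminal state s, F(s) = Σ_{children s' of s} F(s→s'), and for every state s ≠ s₀, F(s) = Σ_{parents s'' of s} F(s''→s). -/

import Mathlib

open scoped BigOperators Classical

/-- The GFlowNet state space `S = {0,1,⊘}^D`: functions from `Fin D` to `Option Bool`,
with `none` denoting the unspecified entry `⊘`. -/
abbrev GState (D : ℕ) := Fin D → Option Bool

/-- The initial state `s₀`, with all entries `⊘`. -/
def initState (D : ℕ) : GState D := fun _ => none

/-- `s'` is a child of `s` (edge `s → s'` of the DAG `G`): `s'` is obtained from `s`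
by changing exactly one `⊘`-entry of `s` to `0` or `1`. -/
def IsChild {D : ℕ} (s s' : GState D) : Prop :=
  ∃ (i : Fin D) (b : Bool), s i = none ∧ s' = Function.update s i (some b)

/-- Terminal states: no `⊘`-entry. -/
def IsTerminal {D : ℕ} (s : GState D) : Prop := ∀ i, s i ≠ none

/-- The embedding of `X = {0,1}^D` as the set of terminal states. -/
def ofX {D : ℕ} (x : Fin D → Bool) : GState D := fun i => some (x i)

/-- `|s|`: the number of non-`⊘` entries of `s`. -/
def numAssigned {D : ℕ} (s : GState D) : ℕ :=
  (Finset.univ.filter fun i => s i ≠ none).card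

/-- A complete trajectory `τ = (t₀ → t₁ → ⋯ → t_n)`, encoded as the list of its states:
it starts at `s₀`, each consecutive pair is an edge of `G`, and it ends at a terminal state. -/
def IsCompleteTraj {D : ℕ} (l : List (GState D)) : Prop :=
  l.head? = some (initState D) ∧ l.Chain' IsChild ∧
    ∃ s, l.getLast? = some s ∧ IsTerminal s

/-- The trajectory `l` ends at the terminal state corresponding to `x ∈ X`. -/
def EndsAt {D : ℕ} (l : List (GState D)) (x : Fin D → Bool) : Prop :=
  l.getLast? = some (ofX x)

/-- `PF` is a forward policy: for every nonterminal `s`, `PF s ·` is a probability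
distribution supported on the children of `s` (`PF s s'` is `P_F(s'|s)`). -/
def IsForwardPolicy {D : ℕ} (PF : GState D → GState D → ℝ) : Prop :=
  ∀ s : GState D, ¬ IsTerminal s →
    (∀ s', 0 ≤ PF s s') ∧ (∀ s', PF s s' ≠ 0 → IsChild s s') ∧
    (∑ s' : GState D, PF s s' = 1)

/-- `PB` is a backward policy: for every noninitial `s'`, `PB s' ·` is a probability
distribution supported on the parents of `s'` (`PB s' s` is `P_B(s|s')`). -/
def IsBackwardPolicy {D : ℕ} (PB : GState D → GState D → ℝ) : Prop :=
  ∀ s' : GState D, s' ≠ initState D →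
    (∀ s, 0 ≤ PB s' s) ∧ (∀ s, PB s' s ≠ 0 → IsChild s s') ∧
    (∑ s : GState D, PB s' s = 1)

/-- `P_F(τ) = ∏_{i<n} P_F(t_{i+1}|t_i)` along a trajectory. -/
def trajPF {D : ℕ} (PF : GState D → GState D → ℝ) (l : List (GState D)) : ℝ :=
  ((l.zip l.tail).map fun p => PF p.1 p.2).prod

/-- `P_B(τ|x) = ∏_{i<n} P_B(t_i|t_{i+1})` along a trajectory. -/
def trajPB {D : ℕ} (PB : GState D → GState D → ℝ) (l : List (GState D)) : ℝ :=
  ((l.zip l.tail).map fun p => PB p.2 p.1).prod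

/-- Trajectory balance for reward `R`: `Z·P_F(τ) = R(x)·P_B(τ|x)` for every complete
trajectory `τ` ending at `x`. -/
def TrajBalance {D : ℕ} (PF PB : GState D → GState D → ℝ) (Z : ℝ)
    (R : (Fin D → Bool) → ℝ) : Prop :=
  ∀ (l : List (GState D)) (x : Fin D → Bool),
    IsCompleteTraj l → EndsAt l x → Z * trajPF PF l = R x * trajPB PB l

/-- The terminating probability `P_T(x)`: the sum of `P_F(τ)` over all complete
trajectories ending at `x`. -/
noncomputable def PT {D : ℕ} (PF : GState D → GState D → ℝ) (x : Fin D → Bool) : ℝ :=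
  ∑ᶠ l ∈ {l : List (GState D) | IsCompleteTraj l ∧ EndsAt l x}, trajPF PF l

/-- A path in `G` from `s` to `t`, encoded as the list of its states. -/
def IsPath {D : ℕ} (l : List (GState D)) (s t : GState D) : Prop :=
  l.Chain' IsChild ∧ l.head? = some s ∧ l.getLast? = some t
/-- The state flow `F(s)`: sum of `F(τ) = Z·P_F(τ)` over complete trajectories through `s`. -/
noncomputable def stateFlow {D : ℕ} (PF : GState D → GState D → ℝ) (Z : ℝ)
    (s : GState D) : ℝ :=
  ∑ᶠ l ∈ {l : List (GState D) | IsCompleteTraj l ∧ s ∈ l}, Z * trajPF PF l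

/-- The edge flow `F(s→s')`: sum of `F(τ) = Z·P_F(τ)` over complete trajectories
containing the edge `s → s'`. -/
noncomputable def edgeFlow {D : ℕ} (PF : GState D → GState D → ℝ) (Z : ℝ)
    (s s' : GState D) : ℝ :=
  ∑ᶠ l ∈ {l : List (GState D) | IsCompleteTraj l ∧ (s, s') ∈ l.zip l.tail}, Z * trajPF PF l

/-- The Shannon entropy `H[P_F(·|s)]` of the forward policy at `s` (natural log,
with `0·log 0 = 0`). -/
noncomputable def stepEntropyF {D : ℕ} (PF : GState D → GState D → ℝ) (s : GState D) : ℝ :=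
  ∑ s' : GState D, Real.negMulLog (PF s s')

/-- The entropy of the flow determined by `P_F`:
`H[P_F] = Σ_τ P_F(τ) · Σ_{i<n} H[P_F(·|t_i)]`. -/
noncomputable def flowEntropy {D : ℕ} (PF : GState D → GState D → ℝ) : ℝ :=
  ∑ᶠ l ∈ {l : List (GState D) | IsCompleteTraj l},
    trajPF PF l * (l.dropLast.map (stepEntropyF PF)).sum

/-- The uniform backward policy `P_B°(s|s') = 1/|s'|` for each parent `s` of `s'`. -/
noncomputable def uniformBackward (D : ℕ) : GState D → GState D → ℝ :=
  fun s' s => if IsChild s s' then 1 / (numAssigned s' : ℝ) else 0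

lemma numAssigned_lt_of_child {D : ℕ} {s s' : GState D} (h : IsChild s s') :
    numAssigned s < numAssigned s' := by
  obtain ⟨i, b, hi, rfl⟩ := h
  apply Finset.card_lt_card
  constructor
  · intro j hj
    simp only [Finset.mem_filter, Finset.mem_univ, true_and] at hj ⊢
    rcases eq_or_ne j i with rfl | hne
    · simp [Function.update_self]
    · simpa [Function.update_of_ne hne] using hj
  · intro hsub
    have := hsub (by simp [Function.update_self] : i ∈ Finset.univ.filter fun j => Function.update s i (some b) j ≠ none)
    simp [hi] at this

lemma nodup_of_chain' {D : ℕ} {l : List (GState D)} (h : l.Chain' IsChild) : l.Nodup := by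
  have h2 : l.Chain' (fun a b : GState D => numAssigned a < numAssigned b) :=
    h.imp fun a b hab => numAssigned_lt_of_child hab
  haveI : IsTrans (GState D) (fun a b => numAssigned a < numAssigned b) :=
    ⟨fun _ _ _ => lt_trans⟩
  exact (List.isChain_iff_pairwise.mp h2).imp fun hlt => fun hab => by simp [hab] at hlt

lemma rel_of_mem_zip_tail {α : Type*} {R : α → α → Prop} :
    ∀ {l : List α}, l.Chain' R → ∀ {a b : α}, (a, b) ∈ l.zip l.tail → R a b
  | [], _, _, _, hm => by simp at hm
  | [x], _, _, _, hm => by simp at hm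
  | x :: y :: t, h, a, b, hm => by
    rw [List.Chain', List.isChain_cons_cons] at h
    rw [show (x :: y :: t).tail = y :: t from rfl, List.zip_cons_cons] at hm
    rcases List.mem_cons.mp hm with heq | hmem
    · obtain ⟨rfl, rfl⟩ := Prod.mk.inj heq
      exact h.1
    · exact rel_of_mem_zip_tail h.2 hmem

lemma exists_unique_succ {α : Type*} :
    ∀ {l : List α}, l.Nodup → ∀ {s : α}, s ∈ l → l.getLast? ≠ some s →
      ∃! s', (s, s') ∈ l.zip l.tail
  | [], _, _, hs, _ => absurd hs List.not_mem_nil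
  | [a], _, s, hs, hlast => by simp at hs hlast; exact absurd hs.symm (by simpa using hlast)
  | a :: b :: t, hnd, s, hs, hlast => by
    have hnd' : (b :: t).Nodup := hnd.of_cons
    have hna : a ∉ b :: t := (List.nodup_cons.mp hnd).1
    have hzip : (a :: b :: t).zip (a :: b :: t).tail = (a, b) :: (b :: t).zip (b :: t).tail := rfl
    rcases List.mem_cons.mp hs with rfl | hmem
    · refine ⟨b, by rw [hzip]; exact List.mem_cons_self, ?_⟩
      intro y hy
      rw [hzip] at hy
      rcases List.mem_cons.mp hy with heq | hmem
      · exact (Prod.mk.inj heq).2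
      · exact absurd ((List.of_mem_zip hmem).1) hna
    · have hlast' : (b :: t).getLast? ≠ some s := by
        rwa [List.getLast?_cons_cons] at hlast
      obtain ⟨s', hs', huniq⟩ := exists_unique_succ hnd' hmem hlast'
      refine ⟨s', by rw [hzip]; exact List.mem_cons_of_mem _ hs', ?_⟩
      intro y hy
      rw [hzip] at hy
      rcases List.mem_cons.mp hy with heq | hmem2
      · rcases (Prod.mk.inj heq).1 with rfl
        exact absurd hmem hna
      · exact huniq y hmem2

lemma exists_unique_pred {α : Type*} :
    ∀ {l : List α}, l.Nodup → ∀ {s : α}, s ∈ l → l.head? ≠ some s →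
      ∃! s'', (s'', s) ∈ l.zip l.tail
  | [], _, _, hs, _ => absurd hs List.not_mem_nil
  | a :: t, hnd, s, hs, hhead => by
    have hsa : s ≠ a := fun h => hhead (by simp [h])
    have hmem : s ∈ t := (List.mem_cons.mp hs).resolve_left hsa
    match t, hnd, hmem with
    | b :: t', hnd, hmem =>
      have hnd' : (b :: t').Nodup := hnd.of_cons
      have hzip : (a :: b :: t').zip (a :: b :: t').tail
          = (a, b) :: (b :: t').zip (b :: t').tail := rfl
      rcases List.mem_cons.mp hmem with rfl | hmem2
      · refine ⟨a, by rw [hzip]; exact List.mem_cons_self, ?_⟩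
        intro y hy
        rw [hzip] at hy
        rcases List.mem_cons.mp hy with heq | hmem3
        · exact (Prod.mk.inj heq).1
        · exact absurd ((List.of_mem_zip hmem3).2) (List.nodup_cons.mp hnd').1
      · have hsb : s ≠ b := fun h => by
          subst h; exact (List.nodup_cons.mp hnd').1 hmem2
        obtain ⟨s'', hs'', huniq⟩ :=
          exists_unique_pred hnd' (List.mem_cons_of_mem _ hmem2) (by simp [Ne.symm hsb])
        refine ⟨s'', by rw [hzip]; exact List.mem_cons_of_mem _ hs'', ?_⟩
        intro y hy
        rw [hzip] at hy
        rcases List.mem_cons.mp hy with heq | hmem3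
        · exact absurd (Prod.mk.inj heq).2 hsb
        · exact huniq y hmem3

lemma traj_finite (D : ℕ) : {l : List (GState D) | IsCompleteTraj l}.Finite := by
  apply Set.Finite.subset (List.finite_length_le (GState D) (Fintype.card (GState D)))
  intro l hl
  exact (nodup_of_chain' hl.2.1).length_le_card


/-- (Flow matching.) For a forward policy `P_F` and `Z > 0`: for every
nonterminal state `s`, `F(s) = Σ_{children s' of s} F(s→s')`, and for every state `s ≠ s₀`,
`F(s) = Σ_{parents s'' of s} F(s''→s)`. -/
theorem statement7 {D : ℕ} (hD : 1 ≤ D)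
    (PF : GState D → GState D → ℝ) (hPF : IsForwardPolicy PF)
    (Z : ℝ) (hZ : 0 < Z) :
    (∀ s : GState D, ¬ IsTerminal s →
      stateFlow PF Z s =
        ∑ s' ∈ Finset.univ.filter (fun s' : GState D => IsChild s s'),
          edgeFlow PF Z s s') ∧
    (∀ s : GState D, s ≠ initState D →
      stateFlow PF Z s =
        ∑ s'' ∈ Finset.univ.filter (fun s'' : GState D => IsChild s'' s),
          edgeFlow PF Z s'' s) := by
  have hT := traj_finite D
  set T : Finset (List (GState D)) := hT.toFinset with hTdef
  have hTm : ∀ l, l ∈ T ↔ IsCompleteTraj l := fun l => hT.mem_toFinset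
  have hstate : ∀ s : GState D,
      stateFlow PF Z s = ∑ l ∈ T.filter (fun l => s ∈ l), Z * trajPF PF l := by
    intro s
    rw [stateFlow, ← finsum_mem_coe_finset]
    congr 1
    ext l
    simp only [Finset.coe_filter, Set.mem_setOf_eq, hTm]
  have hedge : ∀ s s' : GState D,
      edgeFlow PF Z s s' =
        ∑ l ∈ T.filter (fun l => (s, s') ∈ l.zip l.tail), Z * trajPF PF l := by
    intro s s'
    rw [edgeFlow, ← finsum_mem_coe_finset]
    congr 1
    ext l
    simp only [Finset.coe_filter, Set.mem_setOf_eq, hTm]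
  constructor
  · intro s hs
    rw [hstate, Finset.sum_filter]
    have : ∀ s' ∈ Finset.univ.filter (fun s' : GState D => IsChild s s'),
        edgeFlow PF Z s s' = ∑ l ∈ T, if (s, s') ∈ l.zip l.tail then Z * trajPF PF l else 0 :=
      fun s' _ => by rw [hedge, Finset.sum_filter]
    rw [Finset.sum_congr rfl this, Finset.sum_comm]
    apply Finset.sum_congr rfl
    intro l hl
    have hcomp : IsCompleteTraj l := (hTm l).1 hl
    by_cases hmem : s ∈ l
    · rw [if_pos hmem]
      obtain ⟨t, hlastt, hterm⟩ := hcomp.2.2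
      have hne : l.getLast? ≠ some s := by
        rw [hlastt]; intro h
        exact hs (Option.some_inj.mp h ▸ hterm)
      obtain ⟨s', hs', huniq⟩ := exists_unique_succ (nodup_of_chain' hcomp.2.1) hmem hne
      have hchild : IsChild s s' := rel_of_mem_zip_tail hcomp.2.1 hs'
      have hsum := Finset.sum_eq_single_of_mem
        (s := Finset.univ.filter (fun s' : GState D => IsChild s s'))
        (f := fun b => if (s, b) ∈ l.zip l.tail then Z * trajPF PF l else 0)
        s' (by simp [hchild]) (fun b _ hbne => if_neg (fun h => hbne (huniq b h)))
      rw [hsum]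
      exact (if_pos hs').symm
    · rw [if_neg hmem]
      exact (Finset.sum_eq_zero fun s' _ =>
        if_neg (fun h => hmem ((List.of_mem_zip h).1))).symm
  · intro s hs
    rw [hstate, Finset.sum_filter]
    have : ∀ s'' ∈ Finset.univ.filter (fun s'' : GState D => IsChild s'' s),
        edgeFlow PF Z s'' s = ∑ l ∈ T, if (s'', s) ∈ l.zip l.tail then Z * trajPF PF l else 0 :=
      fun s'' _ => by rw [hedge, Finset.sum_filter]
    rw [Finset.sum_congr rfl this, Finset.sum_comm]
    apply Finset.sum_congr rfl
    intro l hl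
    have hcomp : IsCompleteTraj l := (hTm l).1 hl
    by_cases hmem : s ∈ l
    · rw [if_pos hmem]
      have hne : l.head? ≠ some s := by
        rw [hcomp.1]; intro h
        exact hs (Option.some_inj.mp h).symm
      obtain ⟨s'', hs'', huniq⟩ := exists_unique_pred (nodup_of_chain' hcomp.2.1) hmem hne
      have hchild : IsChild s'' s := rel_of_mem_zip_tail hcomp.2.1 hs''
      have hsum := Finset.sum_eq_single_of_mem
        (s := Finset.univ.filter (fun s'' : GState D => IsChild s'' s))
        (f := fun b => if (b, s) ∈ l.zip l.tail then Z * trajPF PF l else 0)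
        s'' (by simp [hchild]) (fun b _ hbne => if_neg (fun h => hbne (huniq b h)))
      rw [hsum]
      exact (if_pos hs'').symm
    · rw [if_neg hmem]
      exact (Finset.sum_eq_zero fun s'' _ =>
        if_neg (fun h => hmem (List.mem_of_mem_tail (List.of_mem_zip h).2))).symm
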